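/- arXiv:2007.06680 — 2 statements merged into one kernel-verified Lean document; each statement's English description precedes it below -/
import Mathlib

section
/- Let G_i ≥ 0 for i = 1,...,t, m ≥ 2G², G_t ≤ G, k > 0, L > 0, and define η_t = k / (m + Σ_{i=1}^t G_i²)^{1/3}. If additionally η_t ≤ 1/(2L), then η_t^{-1} - η_{t-1}^{-1} ≤ (G² / (3 k³ L)) · η_t. -/
open Real

private lemma rpow_third_cube {x : ℝ} (hx : 0 ≤ x) :
    (x ^ ((1 : ℝ) / 3)) ^ (3 : ℕ) = x := by
  rw [← Real.rpow_natCast (x ^ ((1:ℝ)/3)) 3, ← Real.rpow_mul hx]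
  norm_num

private lemma rpow_two_thirds_sq {x : ℝ} (hx : 0 ≤ x) :
    (x ^ ((1 : ℝ) / 3)) ^ (2 : ℕ) = x ^ ((2 : ℝ) / 3) := by
  rw [← Real.rpow_natCast (x ^ ((1:ℝ)/3)) 2, ← Real.rpow_mul hx]
  norm_num

private lemma cube_root_concave {x y : ℝ} (hx : 0 < x) (hy : 0 ≤ y) :
    (x + y) ^ ((1 : ℝ) / 3) ≤ x ^ ((1 : ℝ) / 3) + y / (3 * x ^ ((2 : ℝ) / 3)) := by
  set a := x ^ ((1:ℝ)/3) with ha_def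
  set b := y / (3 * x ^ ((2:ℝ)/3)) with hb_def
  have ha : 0 < a := Real.rpow_pos_of_pos hx _
  have hx23 : 0 < x ^ ((2:ℝ)/3) := Real.rpow_pos_of_pos hx _
  have hb : 0 ≤ b := by positivity
  have ha3 : a ^ (3:ℕ) = x := rpow_third_cube hx.le
  have ha2 : a ^ (2:ℕ) = x ^ ((2:ℝ)/3) := rpow_two_thirds_sq hx.le
  have hkey : x + y ≤ (a + b) ^ (3:ℕ) := by
    have hb2 : 3 * a ^ (2:ℕ) * b = y := by
      rw [ha2, hb_def]; field_simp
    have hexp : (a + b) ^ (3:ℕ) = a ^ (3:ℕ) + 3 * a ^ (2:ℕ) * b + (3 * a * b ^ 2 + b ^ 3) := by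
      ring
    rw [hexp, ha3, hb2]
    nlinarith [mul_nonneg (mul_nonneg ha.le hb) hb, pow_nonneg hb 3]
  have h1 : (x + y) ^ ((1:ℝ)/3) ≤ ((a + b) ^ (3:ℕ)) ^ ((1:ℝ)/3) := by
    apply Real.rpow_le_rpow (by positivity) hkey (by norm_num)
  calc (x + y) ^ ((1:ℝ)/3) ≤ ((a + b) ^ (3:ℕ)) ^ ((1:ℝ)/3) := h1
    _ = a + b := by
        rw [← Real.rpow_natCast (a + b) 3, ← Real.rpow_mul (by positivity)]
        norm_num

set_option maxHeartbeats 1000000 in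
theorem stepsize_inverse_difference_bound
    (t : ℕ) (ht : 1 ≤ t) (Gs : ℕ → ℝ) (G m k L : ℝ)
    (hGs : ∀ i, 0 ≤ Gs i) (hGt : Gs t ≤ G) (hm : 2 * G ^ 2 ≤ m)
    (hk : 0 < k) (hL : 0 < L)
    (η : ℕ → ℝ)
    (hη : ∀ n, η n = k / (m + ∑ i ∈ Finset.Icc 1 n, (Gs i) ^ 2) ^ ((1 : ℝ) / 3))
    (hηt : η t ≤ 1 / (2 * L)) :
    (η t)⁻¹ - (η (t - 1))⁻¹ ≤ G ^ 2 / (3 * k ^ 3 * L) * η t := by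
  obtain ⟨n, rfl⟩ : ∃ n, t = n + 1 := ⟨t - 1, (Nat.succ_pred_eq_of_pos ht).symm⟩
  have htsub : n + 1 - 1 = n := rfl
  have hG0 : 0 ≤ G := le_trans (hGs _) hGt
  set S : ℝ := m + ∑ i ∈ Finset.Icc 1 n, (Gs i) ^ 2 with hS_def
  have hsum : m + ∑ i ∈ Finset.Icc 1 (n + 1), (Gs i) ^ 2 = S + Gs (n + 1) ^ 2 := by
    rw [Finset.sum_Icc_succ_top (by omega : 1 ≤ n + 1), hS_def]; ring
  have hsum_nonneg : 0 ≤ ∑ i ∈ Finset.Icc 1 n, (Gs i) ^ 2 :=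
    Finset.sum_nonneg fun i _ => sq_nonneg _
  have hmS : m ≤ S := by simp [hS_def]; linarith
  have hS_nonneg : 0 ≤ S := by nlinarith [sq_nonneg G]
  have hGsq : Gs (n + 1) ^ 2 ≤ G ^ 2 := by
    apply pow_le_pow_left₀ (hGs _) hGt
  rcases eq_or_lt_of_le hS_nonneg with hS0 | hSpos
  · -- degenerate: S = 0 forces everything zero
    have hm0 : m = 0 := by nlinarith [sq_nonneg G]
    have hG00 : G = 0 := by nlinarith [sq_nonneg G]
    have hGt0 : Gs (n + 1) = 0 := le_antisymm (by linarith [hGt, hG00.le]) (hGs _)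
    have hη1 : η (n + 1) = 0 := by
      rw [hη, hsum, ← hS0, hGt0]
      norm_num
    have hη0 : η (n + 1 - 1) = 0 := by
      rw [hη, htsub, ← hS_def, ← hS0]
      norm_num
    rw [hη1, hη0]
    norm_num
  · set S' : ℝ := S + Gs (n + 1) ^ 2 with hS'_def
    have hS'pos : 0 < S' := by positivity
    set A : ℝ := S ^ ((1:ℝ)/3) with hA_def
    set A' : ℝ := S' ^ ((1:ℝ)/3) with hA'_def
    have hApos : 0 < A := Real.rpow_pos_of_pos hSpos _
    have hA'pos : 0 < A' := Real.rpow_pos_of_pos hS'pos _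
    have hηt_eq : η (n + 1) = k / A' := by rw [hη, hsum]
    have hηprev_eq : η (n + 1 - 1) = k / A := by rw [hη, htsub]
    -- from η_t ≤ 1/(2L): 2 L k ≤ A'
    have h2Lk : 2 * L * k ≤ A' := by
      rw [hηt_eq, div_le_div_iff₀ hA'pos (by positivity)] at hηt
      linarith
    have hcubeA' : A' ^ (3:ℕ) = S' := rpow_third_cube hS'pos.le
    have hcube : 8 * k ^ 3 * L ^ 3 ≤ S' := by
      have := pow_le_pow_left₀ (by positivity : (0:ℝ) ≤ 2 * L * k) h2Lk 3
      rw [hcubeA'] at this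
      nlinarith [this]
    have hS'le : S' ≤ 3 / 2 * S := by
      rw [hS'_def]; nlinarith
    -- key: k * L * A' ≤ S^{2/3}
    have hB : (S ^ ((2:ℝ)/3)) = A ^ (2:ℕ) := (rpow_two_thirds_sq hSpos.le).symm
    have hBpos : 0 < S ^ ((2:ℝ)/3) := Real.rpow_pos_of_pos hSpos _
    have hkey : k * L * A' ≤ S ^ ((2:ℝ)/3) := by
      rw [← pow_le_pow_iff_left₀ (by positivity) hBpos.le (three_ne_zero)]
      have hL3 : (k * L * A') ^ (3:ℕ) = k ^ 3 * L ^ 3 * S' := by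
        rw [mul_pow, mul_pow, hcubeA']
      have hR3 : (S ^ ((2:ℝ)/3)) ^ (3:ℕ) = S ^ (2:ℕ) := by
        rw [← Real.rpow_natCast (S ^ ((2:ℝ)/3)) 3, ← Real.rpow_mul hSpos.le]
        norm_num
      rw [hL3, hR3]
      nlinarith [mul_le_mul_of_nonneg_right hcube hS'pos.le,
        mul_le_mul hS'le hS'le hS'pos.le (by positivity : (0:ℝ) ≤ 3 / 2 * S), sq_nonneg S]
    -- concavity bound
    have hconc : A' ≤ A + G ^ 2 / (3 * S ^ ((2:ℝ)/3)) := by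
      have h := cube_root_concave hSpos (sq_nonneg (Gs (n + 1)))
      have h2 : Gs (n + 1) ^ 2 / (3 * S ^ ((2:ℝ)/3)) ≤ G ^ 2 / (3 * S ^ ((2:ℝ)/3)) := by
        gcongr
      calc A' ≤ A + Gs (n + 1) ^ 2 / (3 * S ^ ((2:ℝ)/3)) := h
        _ ≤ A + G ^ 2 / (3 * S ^ ((2:ℝ)/3)) := by linarith
    have h3 : A' - A ≤ G ^ 2 / (3 * (k * L * A')) := by
      have h4 : G ^ 2 / (3 * S ^ ((2:ℝ)/3)) ≤ G ^ 2 / (3 * (k * L * A')) := by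
        have h30 : 0 < 3 * (k * L * A') := by positivity
        apply div_le_div_of_nonneg_left (by positivity) h30
        linarith
      linarith
    rw [hηt_eq, hηprev_eq, inv_div, inv_div]
    calc A' / k - A / k = (A' - A) / k := by ring
      _ ≤ (G ^ 2 / (3 * (k * L * A'))) / k := by gcongr
      _ = G ^ 2 / (3 * k ^ 3 * L) * (k / A') := by
          field_simp
end

section
/- Under the conditions η_t^{-1} - η_{t-1}^{-1} ≤ (G²/(3k³L))η_t, β_{t+1} = cη_t², 0 < β_{t+1} ≤ 1, and c = G²/(3k³L) + 104B², the coefficient satisfies η_t^{-1}(1-β_{t+1})(1 + 8η_t²B²) - η_{t-1}^{-1} ≤ -96B²η_t. -/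
theorem lyapunov_coefficient_bound (ηt ηt' B G k L c βt1 : ℝ)
    (hηt : 0 < ηt) (hηt' : 0 < ηt') (hB : 0 < B) (hG : 0 < G) (hk : 0 < k) (hL : 0 < L)
    (hβ : βt1 = c * ηt ^ 2) (hβ0 : 0 < βt1) (hβ1 : βt1 ≤ 1)
    (hc : c = G ^ 2 / (3 * k ^ 3 * L) + 104 * B ^ 2)
    (hdiff : ηt⁻¹ - ηt'⁻¹ ≤ G ^ 2 / (3 * k ^ 3 * L) * ηt) :
    ηt⁻¹ * (1 - βt1) * (1 + 8 * ηt ^ 2 * B ^ 2) - ηt'⁻¹ ≤ -96 * B ^ 2 * ηt := by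
  have hβη : βt1 * ηt⁻¹ = c * ηt := by
    rw [hβ]; field_simp
  have key : ηt⁻¹ * (1 - βt1) * (1 + 8 * ηt ^ 2 * B ^ 2) - ηt'⁻¹
      = (ηt⁻¹ - ηt'⁻¹) + 8 * B ^ 2 * ηt * (ηt * ηt⁻¹) - βt1 * ηt⁻¹
        - 8 * ηt * βt1 * B ^ 2 * (ηt * ηt⁻¹) := by ring
  rw [mul_inv_cancel₀ hηt.ne'] at key
  nlinarith [mul_pos (mul_pos hηt hβ0) (mul_pos hB hB), sq_nonneg B]
end
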